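/- arXiv:math/0609733 — 7 statements merged into one kernel-verified Lean document; each statement's English description precedes it below -/
import Mathlib

section
/- Let L be a perfect field containing F_q, let V be a finite-dimensional L-vector space, and let τ : V → V be an additive map that is Frobenius-semilinear, i.e. τ(a·v) = a^q·τ(v) for all a ∈ L, v ∈ V. Then V decomposes as a direct sum V = V_ét ⊕ V_nil of τ-stable subspaces, where τ restricted to V_ét = ⋂_{n≥1} image(τ^n) is bijective and τ restricted to V_nil is nilpotent. -/
section Aux

variable {p : ℕ} [Fact p.Prime] {e : ℕ}
variable {L : Type*} [Field L] [CharP L p] [PerfectRing L p]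
variable {V : Type*} [AddCommGroup V] [Module L V]

theorem aux_pow_surj (m : ℕ) (a : L) : ∃ b : L, b ^ p ^ m = a := by
  induction m generalizing a with
  | zero => exact ⟨a, by simp⟩
  | succ m ih =>
    obtain ⟨c, hc⟩ := ih a
    obtain ⟨b, hb⟩ := surjective_frobenius L p c
    rw [frobenius_def] at hb
    refine ⟨b, ?_⟩
    rw [pow_succ', pow_mul, hb, hc]

omit [Fact p.Prime] [CharP L p] [PerfectRing L p] in
theorem aux_iter_smul (τ : V → V) (hsem : ∀ (a : L) (v : V), τ (a • v) = a ^ p ^ e • τ v)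
    (n : ℕ) (a : L) (v : V) : τ^[n] (a • v) = a ^ p ^ (e * n) • τ^[n] v := by
  induction n generalizing a v with
  | zero => simp
  | succ n ih =>
    rw [Function.iterate_succ_apply, hsem, ih, ← pow_mul, ← pow_add,
      ← Function.iterate_succ_apply]
    have h : e + e * n = e * (n + 1) := by ring
    rw [h]

/-- Antitone ℕ-valued sequences stabilize. -/
theorem aux_antitone_stab (f : ℕ → ℕ) (hf : ∀ n, f (n + 1) ≤ f n) :
    ∃ N, ∀ n, N ≤ n → f n = f N := by
  have hanti : Antitone f := antitone_nat_of_succ_le hf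
  have hne : (Set.range f).Nonempty := ⟨f 0, ⟨0, rfl⟩⟩
  obtain ⟨N, hN⟩ : ∃ N, f N = sInf (Set.range f) := Nat.sInf_mem hne
  refine ⟨N, fun n hn => ?_⟩
  have h1 : f n ≤ f N := hanti hn
  have h2 : f N ≤ f n := hN ▸ Nat.sInf_le ⟨n, rfl⟩
  omega

end Aux

/-- Over a perfect field `L ⊇ 𝔽_q`, a Frobenius-semilinear endomorphism `τ` of a
finite-dimensional `L`-vector space decomposes `V = V_ét ⊕ V_nil` with
`V_ét = ⋂_{n ≥ 1} im(τ^n)`, `τ` bijective on `V_ét` and nilpotent on `V_nil`. -/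
theorem stmt0 (p : ℕ) [Fact p.Prime] (e : ℕ) (he : 0 < e)
    (L : Type*) [Field L] [CharP L p] [PerfectRing L p]
    (V : Type*) [AddCommGroup V] [Module L V] [FiniteDimensional L V]
    (τ : V → V) (hadd : ∀ v w : V, τ (v + w) = τ v + τ w)
    (hsem : ∀ (a : L) (v : V), τ (a • v) = a ^ p ^ e • τ v) :
    ∃ Vet Vnil : Submodule L V,
      IsCompl Vet Vnil ∧
      (∀ v ∈ Vet, τ v ∈ Vet) ∧ (∀ v ∈ Vnil, τ v ∈ Vnil) ∧
      (Vet : Set V) = ⋂ n ≥ 1, Set.range (τ^[n]) ∧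
      Set.BijOn τ Vet Vet ∧
      ∃ n : ℕ, 1 ≤ n ∧ ∀ v ∈ Vnil, τ^[n] v = 0 := by
  classical
  set f : V →+ V := AddMonoidHom.mk' τ hadd with hf
  have hfτ : ∀ v, f v = τ v := fun _ => rfl
  have hiadd : ∀ n (x y : V), τ^[n] (x + y) = τ^[n] x + τ^[n] y := fun n x y =>
    iterate_map_add f n x y
  have hizero : ∀ n, τ^[n] (0 : V) = 0 := fun n => iterate_map_zero f n
  have hisub : ∀ n (x y : V), τ^[n] (x - y) = τ^[n] x - τ^[n] y := fun n x y =>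
    iterate_map_sub f n x y
  -- image and kernel submodules
  have hWsmul : ∀ n (a : L) (w : V), w ∈ Set.range (τ^[n]) → a • w ∈ Set.range (τ^[n]) := by
    rintro n a w ⟨u, rfl⟩
    obtain ⟨b, hb⟩ := aux_pow_surj (p := p) (e * n) a
    exact ⟨b • u, by rw [aux_iter_smul τ hsem, hb]⟩
  let W : ℕ → Submodule L V := fun n =>
    { carrier := Set.range (τ^[n])
      add_mem' := by rintro x y ⟨u, rfl⟩ ⟨w, rfl⟩; exact ⟨u + w, hiadd n u w⟩
      zero_mem' := ⟨0, hizero n⟩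
      smul_mem' := fun a x hx => hWsmul n a x hx }
  let K : ℕ → Submodule L V := fun n =>
    { carrier := {v | τ^[n] v = 0}
      add_mem' := by intro x y hx hy; simp only [Set.mem_setOf_eq] at *; rw [hiadd n, hx, hy, add_zero]
      zero_mem' := hizero n
      smul_mem' := by
        intro a x hx
        simp only [Set.mem_setOf_eq] at *
        rw [aux_iter_smul τ hsem, hx, smul_zero] }
  have hWmem : ∀ n v, v ∈ W n ↔ v ∈ Set.range (τ^[n]) := fun n v => Iff.rfl
  have hKmem : ∀ n v, v ∈ K n ↔ τ^[n] v = 0 := fun n v => Iff.rfl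
  -- monotonicity
  have hWstep : ∀ n, W (n + 1) ≤ W n := by
    rintro n x ⟨u, rfl⟩
    exact ⟨τ u, by rw [← Function.iterate_succ_apply]⟩
  have hWanti : Antitone W := antitone_nat_of_succ_le hWstep
  have hKstep : ∀ n, K n ≤ K (n + 1) := by
    intro n x hx
    rw [hKmem] at hx ⊢
    rw [Function.iterate_succ_apply', hx, ← hfτ, map_zero]
  have hKmono : Monotone K := monotone_nat_of_le_succ hKstep
  -- stabilization
  obtain ⟨N₁, hN₁⟩ := aux_antitone_stab (fun n => Module.finrank L (W n))
    (fun n => Submodule.finrank_mono (hWstep n))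
  obtain ⟨N₂, hN₂⟩ := aux_antitone_stab (fun n => Module.finrank L V - Module.finrank L (K n))
    (fun n => Nat.sub_le_sub_left (Submodule.finrank_mono (hKstep n)) _)
  set N := N₁ + N₂ + 1 with hN
  have hNpos : 1 ≤ N := by omega
  have hWN : ∀ n, N ≤ n → W n = W N := by
    intro n hn
    have h1 : Module.finrank L (W n) = Module.finrank L (W N₁) := hN₁ n (by omega)
    have h2 : Module.finrank L (W N) = Module.finrank L (W N₁) := hN₁ N (by omega)
    exact Submodule.eq_of_le_of_finrank_eq (hWanti hn) (h1.trans h2.symm)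
  have hKN : ∀ n, N ≤ n → K n = K N := by
    intro n hn
    have hb : ∀ m, Module.finrank L (K m) ≤ Module.finrank L V :=
      fun m => Submodule.finrank_le _
    have h1 := hN₂ n (by omega)
    have h2 := hN₂ N (by omega)
    have h3 : Module.finrank L (K n) = Module.finrank L (K N) := by
      have := hb n; have := hb N; have := hb N₂; omega
    exact (Submodule.eq_of_le_of_finrank_eq (hKmono hn) h3.symm).symm
  refine ⟨W N, K N, ?_, ?_, ?_, ?_, ?_, N, hNpos, fun v hv => hv⟩
  · -- IsCompl
    constructor
    · rw [Submodule.disjoint_def]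
      rintro x ⟨u, rfl⟩ hxK
      have h2N : τ^[N + N] u = 0 := by
        rw [Function.iterate_add_apply]; exact hxK
      have : u ∈ K N := by rw [← hKN (N + N) (by omega)]; exact h2N
      exact this
    · rw [codisjoint_iff, eq_top_iff]
      intro v _
      have hv : τ^[N] v ∈ W (N + N) := by
        rw [hWN (N + N) (by omega)]; exact ⟨v, rfl⟩
      obtain ⟨w, hw⟩ := hv
      have hk : v - τ^[N] w ∈ K N := by
        rw [hKmem, hisub, ← Function.iterate_add_apply, hw, sub_self]
      have hmem : v = τ^[N] w + (v - τ^[N] w) := by abel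
      rw [hmem]
      exact Submodule.add_mem_sup ⟨w, rfl⟩ hk
  · -- τ-stable on W N
    rintro v ⟨u, rfl⟩
    rw [← hWN (N + 1) (by omega)]
    exact ⟨u, Function.iterate_succ_apply' τ N u⟩
  · -- τ-stable on K N
    intro v hv
    have : v ∈ K (N + 1) := hKstep N hv
    rw [hKmem] at this ⊢
    rw [← Function.iterate_succ_apply]
    exact this
  · -- set equality
    ext v
    simp only [SetLike.mem_coe, Set.mem_iInter]
    constructor
    · intro hv n hn
      rcases le_or_gt n N with h | h
      · exact hWanti h hv
      · show v ∈ W n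
        rw [hWN n h.le]; exact hv
    · intro hv
      exact hv N hNpos
  · -- BijOn
    refine ⟨?_, ?_, ?_⟩
    · rintro v ⟨u, rfl⟩
      show τ (τ^[N] u) ∈ W N
      exact hWanti (by omega : N ≤ N + 1)
        ⟨u, Function.iterate_succ_apply' τ N u⟩
    · rintro v hv w hw hvw
      have hsub : v - w ∈ K 1 := by
        rw [hKmem]
        simp only [Function.iterate_one]
        rw [← hfτ, map_sub, hfτ, hfτ, hvw, sub_self]
      have hsubK : v - w ∈ K N := hKmono hNpos hsub
      have hsubW : v - w ∈ W N := Submodule.sub_mem _ hv hw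
      have h0 : τ^[N] (v - w) = 0 := hsubK
      obtain ⟨u, hu⟩ := hsubW
      have h2N : τ^[N + N] u = 0 := by rw [Function.iterate_add_apply, hu]; exact h0
      have huK : u ∈ K N := by rw [← hKN (N + N) (by omega)]; exact h2N
      have : v - w = 0 := by rw [← hu]; exact huK
      exact sub_eq_zero.mp this
    · intro v hv
      have hv' : v ∈ W (N + 1) := by rw [hWN (N + 1) (by omega)]; exact hv
      obtain ⟨u, hu⟩ := hv'
      refine ⟨τ^[N] u, ⟨u, rfl⟩, ?_⟩
      rw [← hu]
      exact (Function.iterate_succ_apply' τ N u).symm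
end

section
/- Let K be a field and let H ⊆ M_n(K) be a commutative semisimple K-subalgebra with dim_K H = n. Then H, viewed as a left module over itself via its embedding in M_n(K), makes K^n into an H-module isomorphic to H; in particular K^n is a free H-module of rank 1. -/
set_option maxHeartbeats 1000000
set_option synthInstance.maxHeartbeats 1000000

/-- A commutative semisimple subalgebra `H ⊆ M_n(K)` with `dim_K H = n` makes `K^n`
a free `H`-module of rank one: some vector `v` is a cyclic generator whose orbit
map `H → K^n`, `h ↦ h·v`, is bijective. -/
theorem stmt4 (K : Type*) [Field K] (n : ℕ)
    (H : Subalgebra K (Matrix (Fin n) (Fin n) K))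
    (hcomm : ∀ a b : H, a * b = b * a)
    (hss : IsSemisimpleRing H)
    (hdim : Module.finrank K H = n) :
    ∃ v : Fin n → K,
      Function.Bijective (fun h : H => (h : Matrix (Fin n) (Fin n) K).mulVec v) := by
  classical
  -- the annihilator ideal of a vector
  let ann : (Fin n → K) → Ideal H := fun v =>
    { carrier := {h : H | (h : Matrix (Fin n) (Fin n) K).mulVec v = 0}
      add_mem' := fun {a b} ha hb => by
        simp only [Set.mem_setOf_eq] at *
        rw [Subalgebra.coe_add, Matrix.add_mulVec, ha, hb, add_zero]
      zero_mem' := by simp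
      smul_mem' := fun c x hx => by
        simp only [Set.mem_setOf_eq, smul_eq_mul] at *
        rw [Subalgebra.coe_mul, ← Matrix.mulVec_mulVec, hx, Matrix.mulVec_zero] }
  have mem_ann : ∀ (v) (h : H), h ∈ ann v ↔ (h : Matrix (Fin n) (Fin n) K).mulVec v = 0 :=
    fun _ _ => Iff.rfl
  -- faithfulness
  have faithful : ∀ h : H, (∀ v, (h : Matrix (Fin n) (Fin n) K).mulVec v = 0) → h = 0 := by
    intro h hh
    ext i j
    have := congrFun (hh (Pi.single j 1)) i
    simpa [Matrix.mulVec_single] using this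
  -- H is Artinian over itself
  have : FiniteDimensional K H := inferInstance
  have hart : IsArtinian H H := isArtinian_of_tower K inferInstance
  -- pick a vector with minimal annihilator
  obtain ⟨I, ⟨v, hv⟩, hmin⟩ :=
    (IsWellFounded.wf (α := Ideal H) (r := (· < ·))).has_min
      (Set.range ann) ⟨ann 0, ⟨0, rfl⟩⟩
  subst hv
  -- the minimal annihilator is ⊥
  have hbot : ann v = ⊥ := by
    by_contra hne
    obtain ⟨e, hid, hspan⟩ := IsSemisimpleRing.ideal_eq_span_idempotent (ann v)
    have he0 : e ≠ 0 := by
      rintro rfl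
      exact hne (by rw [hspan, Ideal.span_singleton_eq_bot])
    have heann : e ∈ ann v := hspan ▸ Ideal.subset_span (Set.mem_singleton e)
    obtain ⟨w, hw⟩ : ∃ w, (e : Matrix (Fin n) (Fin n) K).mulVec w ≠ 0 := by
      by_contra hc
      push_neg at hc
      exact he0 (faithful e hc)
    set u := v + (e : Matrix (Fin n) (Fin n) K).mulVec w with hu
    have hsub : ann u ≤ ann v := by
      intro a ha
      rw [mem_ann] at ha ⊢
      rw [hu, Matrix.mulVec_add, Matrix.mulVec_mulVec, ← Subalgebra.coe_mul] at ha
      -- multiply ha by e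
      have h2 := congrArg ((e : Matrix (Fin n) (Fin n) K).mulVec ·) ha
      simp only [Matrix.mulVec_add, Matrix.mulVec_mulVec, ← Subalgebra.coe_mul,
        Matrix.mulVec_zero] at h2
      have hea : (↑(e * a) : Matrix (Fin n) (Fin n) K).mulVec v = 0 := by
        rw [hcomm e a, Subalgebra.coe_mul, ← Matrix.mulVec_mulVec,
          (mem_ann v e).mp heann, Matrix.mulVec_zero]
      have heae : e * (a * e) = a * e := by
        rw [hcomm e (a * e), mul_assoc, hid]
      rw [hea, heae, zero_add] at h2
      -- now ha gives a.mulVec v = 0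
      rw [h2, add_zero] at ha
      exact ha
    have hnmem : e ∉ ann u := by
      rw [mem_ann, hu, Matrix.mulVec_add, (mem_ann v e).mp heann, zero_add,
        Matrix.mulVec_mulVec, ← Subalgebra.coe_mul, hid]
      exact hw
    exact hmin (ann u) ⟨u, rfl⟩ (lt_of_le_of_ne hsub (fun h => hnmem (h ▸ heann)))
  -- the orbit map as a K-linear map
  let φ : H →ₗ[K] (Fin n → K) :=
    { toFun := fun h => (h : Matrix (Fin n) (Fin n) K).mulVec v
      map_add' := fun a b => by
        show (↑(a + b) : Matrix (Fin n) (Fin n) K).mulVec v = _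
        rw [Subalgebra.coe_add, Matrix.add_mulVec]
      map_smul' := fun c a => by
        simp [Matrix.smul_mulVec] }
  have hinj : Function.Injective φ := by
    rw [← LinearMap.ker_eq_bot]
    apply le_antisymm _ bot_le
    intro a ha
    have : a ∈ ann v := (LinearMap.mem_ker.mp ha)
    rw [hbot] at this
    simpa using this
  have hfr : Module.finrank K H = Module.finrank K (Fin n → K) := by
    rw [hdim, Module.finrank_pi, Fintype.card_fin]
  exact ⟨v, hinj, (LinearMap.injective_iff_surjective_of_finrank_eq_finrank hfr).mp hinj⟩
end

section
/- Let K be a field of characteristic p > 0, let V be a finite-dimensional K-vector space, and let π ∈ End_K(V). If p^m ≥ dim_K V, then π^{p^m} is absolutely semisimple, i.e. for every field extension K'/K the endomorphism π^{p^m} ⊗ 1 of V ⊗_K K' has squarefree minimal polynomial. -/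
open Polynomial TensorProduct

/-- Any nonzero polynomial of degree at most `p ^ m` over a field of characteristic `p`
divides `s(X ^ (p ^ m))` for some separable polynomial `s`; moreover `s` can be chosen so that
every irreducible factor of `s(X ^ (p ^ m))` divides the original polynomial. -/
lemma key_aux {L : Type*} [Field L] (p : ℕ) [Fact p.Prime] [CharP L p] (m : ℕ) :
    ∀ (n : ℕ) (μ : L[X]), μ.natDegree ≤ n → μ ≠ 0 → μ.natDegree ≤ p ^ m →
    ∃ s : L[X], s.Separable ∧ μ ∣ Polynomial.expand L (p ^ m) s ∧
      ∀ q : L[X], Irreducible q → q ∣ Polynomial.expand L (p ^ m) s → q ∣ μ := by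
  classical
  haveI : ExpChar L p := ExpChar.prime Fact.out
  have hp1 : 1 < p := (Fact.out : p.Prime).one_lt
  intro n
  induction n using Nat.strong_induction_on with
  | _ n ih =>
  intro μ hn hμ0 hd
  by_cases h0 : μ.natDegree = 0
  · -- μ is a nonzero constant, hence a unit
    have hu : IsUnit μ := by
      rw [Polynomial.eq_C_of_natDegree_eq_zero h0]
      exact isUnit_C.mpr (isUnit_iff_ne_zero.mpr (by
        intro hc
        apply hμ0
        rw [Polynomial.eq_C_of_natDegree_eq_zero h0, hc, map_zero]))
    refine ⟨1, separable_one, ?_, ?_⟩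
    · rw [map_one]; exact hu.dvd
    · intro q hq hdvd
      rw [map_one] at hdvd
      exact absurd (isUnit_of_dvd_one hdvd) hq.not_isUnit
  · -- take an irreducible factor h of μ
    obtain ⟨h, hirr, hdvdμ⟩ := WfDvdMonoid.exists_irreducible_factor
      (Polynomial.not_isUnit_of_natDegree_pos μ (Nat.pos_of_ne_zero h0)) hμ0
    have hfin : FiniteMultiplicity h μ := FiniteMultiplicity.of_not_isUnit hirr.not_isUnit hμ0
    obtain ⟨w, hw, hndvd⟩ := hfin.exists_eq_pow_mul_and_not_dvd
    set c := multiplicity h μ with hc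
    have hc1 : 1 ≤ c := Nat.pos_of_ne_zero (multiplicity_ne_zero.mpr hdvdμ)
    have hw0 : w ≠ 0 := by rintro rfl; rw [mul_zero] at hw; exact hμ0 hw
    have hh0 : h ≠ 0 := hirr.ne_zero
    have hhd : 0 < h.natDegree := hirr.natDegree_pos
    have hdeg : μ.natDegree = c * h.natDegree + w.natDegree := by
      rw [hw, Polynomial.natDegree_mul (pow_ne_zero _ hh0) hw0, Polynomial.natDegree_pow]
    have hwlt' : w.natDegree < μ.natDegree := by
      have h1 : 1 * 1 ≤ c * h.natDegree := Nat.mul_le_mul hc1 hhd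
      omega
    have hwlt : w.natDegree < n := by omega
    -- inductive hypothesis applied to w
    obtain ⟨sw, swsep, swdvd, swinv⟩ := ih w.natDegree (by omega) w le_rfl hw0 (by omega)
    -- separable contraction of h
    obtain ⟨g, gsep, e, hge⟩ := hirr.hasSeparableContraction p
    have hgd : h.natDegree = g.natDegree * p ^ e := by
      rw [← hge, Polynomial.natDegree_expand]
    have hgd1 : 1 ≤ g.natDegree := by
      rcases Nat.eq_zero_or_pos g.natDegree with h' | h'
      · rw [h', zero_mul] at hgd; omega
      · exact h'
    have hpe : p ^ e ≤ p ^ m := by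
      calc p ^ e ≤ g.natDegree * p ^ e := Nat.le_mul_of_pos_left _ hgd1
        _ = h.natDegree := hgd.symm
        _ ≤ μ.natDegree := Polynomial.natDegree_le_of_dvd hdvdμ hμ0
        _ ≤ p ^ m := hd
    have hem : e ≤ m := (Nat.pow_le_pow_iff_right hp1).mp hpe
    set t := m - e with ht
    set sh : L[X] := g.map ((frobenius L p) ^ t) with hsh
    have hkey : Polynomial.expand L (p ^ m) sh = h ^ p ^ t := by
      rw [hsh, ← Polynomial.map_expand, show p ^ m = p ^ t * p ^ e by
        rw [← pow_add, Nat.sub_add_cancel hem], ← Polynomial.expand_expand, hge,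
        ← iterateFrobenius_eq_pow, Polynomial.map_iterateFrobenius_expand]
    have shsep : sh.Separable := gsep.map
    have hcle : c ≤ p ^ t := by
      have hpeh : p ^ e ≤ h.natDegree := hgd ▸ Nat.le_mul_of_pos_left _ hgd1
      have h1 : c * p ^ e ≤ c * h.natDegree := Nat.mul_le_mul_left c hpeh
      have h2 : c * h.natDegree ≤ μ.natDegree := by omega
      have h3 : c * p ^ e ≤ p ^ t * p ^ e := by
        calc c * p ^ e ≤ μ.natDegree := le_trans h1 h2
          _ ≤ p ^ m := hd
          _ = p ^ t * p ^ e := by rw [← pow_add, Nat.sub_add_cancel hem]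
      exact Nat.le_of_mul_le_mul_right h3 (pow_pos (by omega) e)
    have hhc : h ^ c ∣ Polynomial.expand L (p ^ m) sh := by
      rw [hkey]; exact pow_dvd_pow h hcle
    have sh0 : sh ≠ 0 := by
      intro h'
      have := hkey
      rw [h', map_zero] at this
      exact pow_ne_zero _ hh0 this.symm
    -- coprimality of sh and sw
    have hcop : IsCoprime sh sw := by
      rw [← EuclideanDomain.gcd_isUnit_iff]
      by_contra hgu
      have hg0 : EuclideanDomain.gcd sh sw ≠ 0 := fun h' ↦
        sh0 (EuclideanDomain.gcd_eq_zero_iff.mp h').1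
      obtain ⟨i, iirr, hi⟩ := WfDvdMonoid.exists_irreducible_factor hgu hg0
      have hish : i ∣ sh := hi.trans (EuclideanDomain.gcd_dvd_left _ _)
      have hisw : i ∣ sw := hi.trans (EuclideanDomain.gcd_dvd_right _ _)
      have hei : Polynomial.expand L (p ^ m) i ∣ h ^ p ^ t := by
        rw [← hkey]; exact _root_.map_dvd (Polynomial.expand L (p ^ m)) hish
      have hei0 : Polynomial.expand L (p ^ m) i ≠ 0 := fun h' ↦
        iirr.ne_zero ((Polynomial.expand_eq_zero (pow_pos (by omega) m)).mp h')
      have heiu : ¬ IsUnit (Polynomial.expand L (p ^ m) i) := by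
        intro h'
        have := Polynomial.natDegree_eq_zero_of_isUnit h'
        rw [Polynomial.natDegree_expand] at this
        have := iirr.natDegree_pos
        have := pow_pos (show 0 < p by omega) m
        nlinarith
      obtain ⟨q, qirr, hq⟩ := WfDvdMonoid.exists_irreducible_factor heiu hei0
      have hqh : q ∣ h := qirr.prime.dvd_of_dvd_pow (hq.trans hei)
      have hqw : q ∣ w := swinv q qirr
        ((hq.trans (_root_.map_dvd (Polynomial.expand L (p ^ m)) hisw)))
      have : h ∣ w := ((qirr.associated_of_dvd hirr hqh).symm.dvd).trans hqw
      exact hndvd this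
    refine ⟨sh * sw, shsep.mul swsep hcop, ?_, ?_⟩
    · rw [map_mul, hw]
      exact mul_dvd_mul hhc swdvd
    · intro q qirr hq
      rw [map_mul] at hq
      rcases qirr.prime.dvd_mul.mp hq with h' | h'
      · rw [hkey] at h'
        exact (qirr.prime.dvd_of_dvd_pow h').trans hdvdμ
      · exact (swinv q qirr h').trans ⟨h ^ c, by rw [hw, mul_comm]⟩

lemma baseChange_pow_aux {K V : Type*} [Field K] [AddCommGroup V] [Module K V]
    (K' : Type*) [Field K'] [Algebra K K'] (f : Module.End K V) (k : ℕ) :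
    LinearMap.baseChange K' ((f ^ k : Module.End K V) : V →ₗ[K] V) =
      ((LinearMap.baseChange K' (f : V →ₗ[K] V) : Module.End K' (K' ⊗[K] V)) ^ k) := by
  induction k with
  | zero => ext x; simp [Module.End.one_eq_id]
  | succ n ihn =>
    rw [pow_succ, pow_succ, Module.End.mul_eq_comp, Module.End.mul_eq_comp,
      LinearMap.baseChange_comp, ihn]

/-- In characteristic `p`, if `p^m ≥ dim_K V` then `π^{p^m}` is absolutely
semisimple: after any base field extension its minimal polynomial is squarefree. -/
theorem stmt11 {K V : Type*} [Field K] [AddCommGroup V] [Module K V]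
    [FiniteDimensional K V] (p : ℕ) [Fact p.Prime] [CharP K p]
    (π : Module.End K V) (m : ℕ) (h : Module.finrank K V ≤ p ^ m) :
    ∀ (K' : Type*) [Field K'] [Algebra K K'],
      Squarefree (minpoly K' (LinearMap.baseChange K' ((π ^ p ^ m : Module.End K V) : V →ₗ[K] V))) := by
  intro K' _ _
  haveI : CharP K' p := charP_of_injective_algebraMap (algebraMap K K').injective p
  set f : Module.End K' (K' ⊗[K] V) := LinearMap.baseChange K' (π : V →ₗ[K] V) with hf
  have hμ0 : minpoly K' f ≠ 0 := minpoly.ne_zero_of_finite K' f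
  have hμd : (minpoly K' f).natDegree ≤ p ^ m := by
    have h1 : minpoly K' f ∣ LinearMap.charpoly f := LinearMap.minpoly_dvd_charpoly f
    have h2 : (LinearMap.charpoly f).natDegree = Module.finrank K' (K' ⊗[K] V) :=
      LinearMap.charpoly_natDegree f
    have h3 : Module.finrank K' (K' ⊗[K] V) = Module.finrank K V :=
      Module.finrank_baseChange
    calc (minpoly K' f).natDegree ≤ (LinearMap.charpoly f).natDegree :=
          Polynomial.natDegree_le_of_dvd h1 (LinearMap.charpoly_monic f).ne_zero
      _ ≤ p ^ m := by rw [h2, h3]; exact h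
  obtain ⟨s, hs, hdvd, -⟩ := key_aux p m (minpoly K' f).natDegree (minpoly K' f) le_rfl hμ0 hμd
  have h0 : Polynomial.aeval (f ^ p ^ m) s = 0 := by
    rw [← Polynomial.expand_aeval]
    obtain ⟨c, hc⟩ := hdvd
    rw [hc, map_mul, minpoly.aeval K' f, zero_mul]
  have hss : (f ^ p ^ m).IsSemisimple :=
    Module.End.isSemisimple_of_squarefree_aeval_eq_zero hs.squarefree h0
  rw [baseChange_pow_aux K' π (p ^ m)]
  exact hss.minpoly_squarefree
end

section
/- Let K ⊆ L be a field extension and let f, g ∈ K[x] be nonzero polynomials. Define r_K(f,g) = Σ_μ m(μ)·n(μ)·deg μ, where the sum runs over monic irreducible μ ∈ K[x] and m(μ), n(μ) are the multiplicities of μ in f and g respectively; define r_L(f,g) analogously using the factorizations in L[x]. Then r_K(f,g) ≤ r_L(f,g), with equality if every irreducible common factor of f and g in K[x] is separable, and in particular whenever L is a separable extension of K. -/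
open Polynomial UniqueFactorizationMonoid

/-- `rinv K f g = Σ_μ m(μ)·n(μ)·deg μ`, summed over the monic irreducible factors
`μ` of `f` and `g` with multiplicities `m(μ)`, `n(μ)`. -/
noncomputable def rinv (K : Type*) [Field K] (f g : K[X]) : ℕ :=
  letI : DecidableEq K := Classical.decEq K
  letI : DecidableEq K[X] := Classical.decEq _
  ∑ μ ∈ (normalizedFactors f).toFinset ∪ (normalizedFactors g).toFinset,
    (normalizedFactors f).count μ * (normalizedFactors g).count μ * μ.natDegree

section Aux

variable {K L : Type*} [Field K] [Field L]

/-- Members of `normalizedFactors` of a polynomial over a field are monic. -/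
lemma monic_of_mem_normalizedFactors [DecidableEq K] {f μ : K[X]} (h : μ ∈ normalizedFactors f) : μ.Monic := by
  classical
  have h1 : Irreducible μ := irreducible_of_normalized_factor μ h
  have h2 := normalize_normalized_factor μ h
  rw [← h2]
  exact monic_normalize h1.ne_zero

/-- Cancellation of `expand` in divisibility, for a monic divisor. -/
lemma expand_dvd_cancel {N : ℕ} (hN : 0 < N) {a b : K[X]} (ha : a.Monic)
    (h : Polynomial.expand K N a ∣ Polynomial.expand K N b) : a ∣ b := by
  rw [← Polynomial.modByMonic_eq_zero_iff_dvd ha]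
  by_contra hr
  have hmod := Polynomial.modByMonic_add_div b a
  have e1 : Polynomial.expand K N (b %ₘ a) =
      Polynomial.expand K N b - Polynomial.expand K N a * Polynomial.expand K N (b /ₘ a) := by
    rw [← map_mul, ← map_sub]
    congr 1
    rw [eq_sub_iff_add_eq, hmod]
  have h2 : Polynomial.expand K N a ∣ Polynomial.expand K N (b %ₘ a) := by
    rw [e1]; exact dvd_sub h (dvd_mul_right _ _)
  have h3 : (Polynomial.expand K N a).natDegree ≤ (Polynomial.expand K N (b %ₘ a)).natDegree :=
    Polynomial.natDegree_le_of_dvd h2 (by rwa [Ne, Polynomial.expand_eq_zero hN])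
  rw [Polynomial.natDegree_expand, Polynomial.natDegree_expand] at h3
  have h4 : (b %ₘ a).degree < a.degree := Polynomial.degree_modByMonic_lt b ha
  have h5 : (b %ₘ a).natDegree < a.natDegree := Polynomial.natDegree_lt_natDegree hr h4
  have h6 : (b %ₘ a).natDegree * N < a.natDegree * N := (Nat.mul_lt_mul_right hN).mpr h5
  omega

/-- Over a separable extension, an irreducible monic polynomial stays squarefree. -/
lemma squarefree_map_of_isSeparable [Algebra K L] [Algebra.IsSeparable K L]
    {μ : K[X]} (hm : μ.Monic) (hirr : Irreducible μ) :
    Squarefree (μ.map (algebraMap K L)) := by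
  classical
  have hmapm : (μ.map (algebraMap K L)).Monic := hm.map _
  have key : ∀ ν : L[X], ν.Monic → Irreducible ν → ¬ (ν * ν ∣ μ.map (algebraMap K L)) := by
    intro ν hνm hνi hdvd
    haveI : Fact (Irreducible ν) := ⟨hνi⟩
    set M := AdjoinRoot ν
    set α : M := AdjoinRoot.root ν with hα
    have hminL : minpoly L α = ν := by
      rw [hα, AdjoinRoot.minpoly_root hνi.ne_zero, hνm.leadingCoeff, inv_one, map_one, mul_one]
    obtain ⟨q, hqK⟩ := ExpChar.exists K
    haveI := hqK
    haveI : ExpChar L q := expChar_of_injective_algebraMap (algebraMap K L).injective q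
    obtain ⟨g, hgsep, m, hgm⟩ := hνi.hasSeparableContraction q
    have hq0 : 0 < q ^ m := Nat.pos_of_ne_zero (pow_ne_zero m (expChar_ne_zero L q))
    have hνα : aeval α ν = 0 := by
      have := minpoly.aeval L α
      rwa [hminL] at this
    set β : M := α ^ q ^ m with hβ
    have hβsep : IsSeparable L β := by
      have h0 : aeval β g = 0 := by
        rw [hβ, ← Polynomial.expand_aeval (q ^ m) g α, hgm]
        exact hνα
      exact hgsep.of_dvd (minpoly.dvd L _ h0)
    have hβsepK : IsSeparable K β :=
      IsSeparable.of_algebra_isSeparable_of_isSeparable (F := K) (E := L) hβsep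
    set h : K[X] := minpoly K β with hh
    have hhsep : h.Separable := hβsepK
    have hνdvdmap : ν ∣ μ.map (algebraMap K L) := (dvd_mul_right ν ν).trans hdvd
    have haμ : aeval α μ = 0 := by
      rw [← Polynomial.aeval_map_algebraMap L α μ]
      obtain ⟨c, hc⟩ := hνdvdmap
      rw [hc, map_mul, hνα, zero_mul]
    have hμeq : μ = minpoly K α := minpoly.eq_of_irreducible_of_monic hirr haμ hm
    have hdvd2 : μ ∣ Polynomial.expand K (q ^ m) h := by
      rw [hμeq]
      refine minpoly.dvd K α ?_
      rw [Polynomial.expand_aeval]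
      exact minpoly.aeval K β
    have hdvd3 : Polynomial.expand L (q ^ m) (g * g) ∣
        Polynomial.expand L (q ^ m) (h.map (algebraMap K L)) := by
      have h1 : ν * ν ∣ (Polynomial.expand K (q ^ m) h).map (algebraMap K L) :=
        hdvd.trans (Polynomial.map_dvd _ hdvd2)
      rw [Polynomial.map_expand] at h1
      rw [map_mul, hgm]
      exact h1
    have hgmonic : g.Monic := (Polynomial.monic_expand_iff hq0).mp (by rw [hgm]; exact hνm)
    have hgg : g * g ∣ h.map (algebraMap K L) :=
      expand_dvd_cancel hq0 (hgmonic.mul hgmonic) hdvd3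
    have hunit : IsUnit g := ((hhsep.map).squarefree) g hgg
    have hdeg : ν.natDegree = g.natDegree * q ^ m := by
      rw [← hgm, Polynomial.natDegree_expand]
    have : ν.natDegree = 0 := by
      rw [hdeg, Polynomial.natDegree_eq_zero_of_isUnit hunit, zero_mul]
    exact absurd this hνi.natDegree_pos.ne'
  intro x hxx
  by_contra hxu
  have hmap0 : μ.map (algebraMap K L) ≠ 0 := hmapm.ne_zero
  have hx0 : x ≠ 0 := by
    rintro rfl
    rw [zero_mul] at hxx
    exact hmap0 (zero_dvd_iff.mp hxx)
  obtain ⟨ν, hνi, hνd⟩ := WfDvdMonoid.exists_irreducible_factor hxu hx0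
  have hν'm : (normalize ν).Monic := monic_normalize hνi.ne_zero
  have hν'i : Irreducible (normalize ν) := (associated_normalize ν).irreducible hνi
  have hν'd : normalize ν ∣ x := (normalize_dvd_iff).mpr hνd
  exact key (normalize ν) hν'm hν'i ((mul_dvd_mul hν'd hν'd).trans hxx)

lemma nf_map_bind [DecidableEq K] [DecidableEq L] (φ : K →+* L) {f : K[X]} (hf : f ≠ 0) :
    normalizedFactors (f.map φ) =
      (normalizedFactors f).bind fun μ => normalizedFactors (μ.map φ) := by
  classical
  have step : ∀ s : Multiset K[X], (0 : K[X]) ∉ s →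
      normalizedFactors ((s.prod).map φ) = s.bind fun μ => normalizedFactors (μ.map φ) := by
    intro s
    induction s using Multiset.induction_on with
    | empty =>
        intro _
        simp [normalizedFactors_one]
    | cons a s ih =>
        intro h0
        have ha : a ≠ 0 := fun h => h0 (h ▸ Multiset.mem_cons_self a s)
        have hs0 : (0 : K[X]) ∉ s := fun h => h0 (Multiset.mem_cons_of_mem h)
        have hsp : s.prod ≠ 0 := Multiset.prod_ne_zero hs0
        rw [Multiset.prod_cons, Polynomial.map_mul,
          normalizedFactors_mul (Polynomial.map_ne_zero ha) (Polynomial.map_ne_zero hsp),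
          ih hs0, Multiset.cons_bind]
  have h1 : Associated ((normalizedFactors f).prod) f := prod_normalizedFactors hf
  have h3 : Associated ((normalizedFactors f).prod.map φ) (f.map φ) := by
    have := h1.map (Polynomial.mapRingHom φ).toMonoidHom
    simpa using this
  have hp0 : (normalizedFactors f).prod ≠ 0 := by
    intro h
    rw [h] at h1
    exact hf ((associated_zero_iff_eq_zero f).mp h1.symm)
  have h4 : (normalizedFactors f).prod.map φ ≠ 0 := Polynomial.map_ne_zero hp0
  have h5 : f.map φ ≠ 0 := Polynomial.map_ne_zero hf
  calc normalizedFactors (f.map φ)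
      = normalizedFactors ((normalizedFactors f).prod.map φ) :=
        ((associated_iff_normalizedFactors_eq_normalizedFactors h4 h5).mp h3).symm
    _ = (normalizedFactors f).bind fun μ => normalizedFactors (μ.map φ) :=
        step _ (zero_notMem_normalizedFactors f)

lemma sum_union_eq_inter {α : Type*} [DecidableEq α] (s t : Multiset α) (d : α → ℕ) :
    ∑ x ∈ s.toFinset ∪ t.toFinset, s.count x * t.count x * d x
      = ∑ x ∈ s.toFinset ∩ t.toFinset, s.count x * t.count x * d x := by
  refine (Finset.sum_subset Finset.inter_subset_union ?_).symm
  intro x hx hnx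
  by_cases h1 : x ∈ s.toFinset
  · have h2 : x ∉ t.toFinset := fun h2 => hnx (Finset.mem_inter.mpr ⟨h1, h2⟩)
    rw [Multiset.count_eq_zero_of_notMem (show x ∉ t by simpa using h2)]
    simp
  · rw [Multiset.count_eq_zero_of_notMem (show x ∉ s by simpa using h1)]
    simp

lemma natDegree_eq_sum_nf [DecidableEq K] [DecidableEq K[X]] {p : K[X]} (hp : p.Monic) :
    p.natDegree = ∑ ν ∈ (normalizedFactors p).toFinset,
      (normalizedFactors p).count ν * ν.natDegree := by
  classical
  have hmonic : ∀ ν ∈ normalizedFactors p, Polynomial.Monic ν :=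
    fun ν hν => monic_of_mem_normalizedFactors hν
  have h1 : (normalizedFactors p).prod = p := by
    refine eq_of_monic_of_associated ?_ hp (prod_normalizedFactors hp.ne_zero)
    have := Polynomial.monic_multiset_prod_of_monic (normalizedFactors p) id
      (fun i hi => hmonic i hi)
    simpa using this
  calc p.natDegree = ((normalizedFactors p).map natDegree).sum := by
        rw [← h1, Polynomial.natDegree_multiset_prod_of_monic _ hmonic, h1]
    _ = ∑ ν ∈ (normalizedFactors p).toFinset,
          (normalizedFactors p).count ν * ν.natDegree := by
        rw [Finset.sum_multiset_map_count]
        simp [smul_eq_mul]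

theorem rinv_aux (K L : Type*) [Field K] [Field L] [Algebra K L]
    (f g : K[X]) (hf : f ≠ 0) (hg : g ≠ 0) :
    rinv K f g ≤ rinv L (f.map (algebraMap K L)) (g.map (algebraMap K L)) ∧
    ((∀ μ : K[X], μ.Monic → Irreducible μ → μ ∣ f → μ ∣ g →
        Squarefree (μ.map (algebraMap K L))) →
      rinv K f g = rinv L (f.map (algebraMap K L)) (g.map (algebraMap K L))) := by
  letI : DecidableEq K := Classical.decEq K
  letI : DecidableEq L := Classical.decEq L
  letI : DecidableEq K[X] := Classical.decEq _
  letI : DecidableEq L[X] := Classical.decEq _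
  set φ := algebraMap K L with hφ
  have hfL : f.map φ ≠ 0 := Polynomial.map_ne_zero hf
  have hgL : g.map φ ≠ 0 := Polynomial.map_ne_zero hg
  have hbf := nf_map_bind φ hf
  have hbg := nf_map_bind φ hg
  -- disjointness of factor supports of distinct irreducible monic polynomials
  have hdisj : ∀ μ₁ μ₂ : K[X], Irreducible μ₁ → Irreducible μ₂ → μ₁.Monic → μ₂.Monic →
      μ₁ ≠ μ₂ → ∀ ν : L[X], ν ∈ normalizedFactors (μ₁.map φ) →
      ν ∈ normalizedFactors (μ₂.map φ) → False := by
    intro μ₁ μ₂ h1 h2 hm1 hm2 hne ν hν1 hν2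
    have hcop : IsCoprime μ₁ μ₂ := h1.coprime_iff_not_dvd.mpr
      (fun hdvd => hne (eq_of_monic_of_associated hm1 hm2 (h1.associated_of_dvd h2 hdvd)))
    have hcopL : IsCoprime (μ₁.map φ) (μ₂.map φ) := (Polynomial.isCoprime_map φ).mpr hcop
    exact (irreducible_of_normalized_factor ν hν1).not_isUnit
      (hcopL.isUnit_of_dvd' (dvd_of_mem_normalizedFactors hν1)
        (dvd_of_mem_normalizedFactors hν2))
  -- the count formula
  have hcount : ∀ (h : K[X]), h ≠ 0 → ∀ μ₀ : K[X], μ₀ ∈ normalizedFactors h →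
      ∀ ν : L[X], ν ∈ normalizedFactors (μ₀.map φ) →
      (normalizedFactors (h.map φ)).count ν =
        (normalizedFactors h).count μ₀ * (normalizedFactors (μ₀.map φ)).count ν := by
    intro h hh μ₀ hμ₀ ν hν
    rw [nf_map_bind φ hh, Multiset.count_bind, Finset.sum_multiset_map_count]
    rw [Finset.sum_eq_single μ₀]
    · rw [smul_eq_mul]
    · intro b hb hbne
      have hb' : b ∈ normalizedFactors h := Multiset.mem_toFinset.mp hb
      have : ν ∉ normalizedFactors (b.map φ) := fun hmem =>
        hdisj b μ₀ (irreducible_of_normalized_factor b hb')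
          (irreducible_of_normalized_factor μ₀ hμ₀)
          (monic_of_mem_normalizedFactors hb') (monic_of_mem_normalizedFactors hμ₀)
          hbne ν hmem hν
      rw [Multiset.count_eq_zero_of_notMem this, smul_zero]
    · intro habs
      exact absurd (Multiset.mem_toFinset.mpr hμ₀) habs
  set T : Finset K[X] := (normalizedFactors f).toFinset ∩ (normalizedFactors g).toFinset with hT
  have hTmem : ∀ μ ∈ T, μ ∈ normalizedFactors f ∧ μ ∈ normalizedFactors g := by
    intro μ hμ
    rw [hT, Finset.mem_inter, Multiset.mem_toFinset, Multiset.mem_toFinset] at hμ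
    exact hμ
  -- structure of the common support over L
  have hTL : (normalizedFactors (f.map φ)).toFinset ∩ (normalizedFactors (g.map φ)).toFinset
      = T.biUnion (fun μ => (normalizedFactors (μ.map φ)).toFinset) := by
    ext ν
    simp only [Finset.mem_inter, Multiset.mem_toFinset, Finset.mem_biUnion]
    constructor
    · rintro ⟨h1, h2⟩
      rw [hbf, Multiset.mem_bind] at h1
      rw [hbg, Multiset.mem_bind] at h2
      obtain ⟨μ, hμf, hν1⟩ := h1
      obtain ⟨μ', hμ'g, hν2⟩ := h2
      have heq : μ = μ' := by
        by_contra hne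
        exact hdisj μ μ' (irreducible_of_normalized_factor μ hμf)
          (irreducible_of_normalized_factor μ' hμ'g)
          (monic_of_mem_normalizedFactors hμf) (monic_of_mem_normalizedFactors hμ'g)
          hne ν hν1 hν2
      subst heq
      exact ⟨μ, Finset.mem_inter.mpr ⟨Multiset.mem_toFinset.mpr hμf,
        Multiset.mem_toFinset.mpr hμ'g⟩, hν1⟩
    · rintro ⟨μ, hμT, hν⟩
      obtain ⟨hμf, hμg⟩ := hTmem μ hμT
      constructor
      · rw [hbf, Multiset.mem_bind]; exact ⟨μ, hμf, hν⟩
      · rw [hbg, Multiset.mem_bind]; exact ⟨μ, hμg, hν⟩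
  have hpair : (↑T : Set K[X]).PairwiseDisjoint
      (fun μ => (normalizedFactors (μ.map φ)).toFinset) := by
    intro a ha b hb hab
    have ha' := hTmem a (by exact_mod_cast ha)
    have hb' := hTmem b (by exact_mod_cast hb)
    refine Finset.disjoint_left.mpr ?_
    intro ν hνa hνb
    exact hdisj a b (irreducible_of_normalized_factor a ha'.1)
      (irreducible_of_normalized_factor b hb'.1)
      (monic_of_mem_normalizedFactors ha'.1) (monic_of_mem_normalizedFactors hb'.1)
      hab ν (Multiset.mem_toFinset.mp hνa) (Multiset.mem_toFinset.mp hνb)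
  -- rewrite both sides
  have hK : rinv K f g = ∑ μ ∈ T, (normalizedFactors f).count μ *
      (normalizedFactors g).count μ * μ.natDegree := by
    rw [rinv]
    exact sum_union_eq_inter _ _ _
  have hL : rinv L (f.map φ) (g.map φ) = ∑ μ ∈ T,
      ∑ ν ∈ (normalizedFactors (μ.map φ)).toFinset,
        (normalizedFactors (f.map φ)).count ν * (normalizedFactors (g.map φ)).count ν
          * ν.natDegree := by
    rw [rinv, sum_union_eq_inter, hTL, Finset.sum_biUnion hpair]
  -- per-factor expressions
  have hinner : ∀ μ ∈ T, ∑ ν ∈ (normalizedFactors (μ.map φ)).toFinset,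
      (normalizedFactors (f.map φ)).count ν * (normalizedFactors (g.map φ)).count ν
        * ν.natDegree
      = ∑ ν ∈ (normalizedFactors (μ.map φ)).toFinset,
        ((normalizedFactors f).count μ * (normalizedFactors (μ.map φ)).count ν) *
        ((normalizedFactors g).count μ * (normalizedFactors (μ.map φ)).count ν) *
          ν.natDegree := by
    intro μ hμ
    obtain ⟨hμf, hμg⟩ := hTmem μ hμ
    refine Finset.sum_congr rfl ?_
    intro ν hν
    rw [hcount f hf μ hμf ν (Multiset.mem_toFinset.mp hν),
      hcount g hg μ hμg ν (Multiset.mem_toFinset.mp hν)]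
  have hKterm : ∀ μ ∈ T, (normalizedFactors f).count μ *
      (normalizedFactors g).count μ * μ.natDegree
      = ∑ ν ∈ (normalizedFactors (μ.map φ)).toFinset,
          (normalizedFactors f).count μ * (normalizedFactors g).count μ *
            ((normalizedFactors (μ.map φ)).count ν * ν.natDegree) := by
    intro μ hμ
    obtain ⟨hμf, _⟩ := hTmem μ hμ
    have hm : (μ.map φ).Monic := (monic_of_mem_normalizedFactors hμf).map φ
    have hd := natDegree_eq_sum_nf hm
    have hdμ : μ.natDegree = (μ.map φ).natDegree :=
      ((monic_of_mem_normalizedFactors hμf).natDegree_map φ).symm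
    rw [hdμ, hd, Finset.mul_sum]
  constructor
  · rw [hK, hL]
    refine Finset.sum_le_sum ?_
    intro μ hμ
    rw [hKterm μ hμ, hinner μ hμ]
    refine Finset.sum_le_sum ?_
    intro ν hν
    have he : 1 ≤ (normalizedFactors (μ.map φ)).count ν :=
      Multiset.one_le_count_iff_mem.mpr (Multiset.mem_toFinset.mp hν)
    set a := (normalizedFactors f).count μ
    set b := (normalizedFactors g).count μ
    set e := (normalizedFactors (μ.map φ)).count ν
    set d := ν.natDegree
    calc a * b * (e * d) ≤ a * b * (e * d) * e :=
          Nat.le_mul_of_pos_right _ (lt_of_lt_of_le zero_lt_one he)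
      _ = a * e * (b * e) * d := by ring
  · intro hsq
    rw [hK, hL]
    refine Finset.sum_congr rfl ?_
    intro μ hμ
    rw [hKterm μ hμ, hinner μ hμ]
    refine Finset.sum_congr rfl ?_
    intro ν hν
    obtain ⟨hμf, hμg⟩ := hTmem μ hμ
    have hnodup : (normalizedFactors (μ.map φ)).Nodup := by
      have hm : (μ.map φ).Monic := (monic_of_mem_normalizedFactors hμf).map φ
      exact (squarefree_iff_nodup_normalizedFactors hm.ne_zero).mp
        (hsq μ (monic_of_mem_normalizedFactors hμf) (irreducible_of_normalized_factor μ hμf)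
          (dvd_of_mem_normalizedFactors hμf) (dvd_of_mem_normalizedFactors hμg))
    have he : (normalizedFactors (μ.map φ)).count ν = 1 :=
      Multiset.count_eq_one_of_mem hnodup (Multiset.mem_toFinset.mp hν)
    rw [he]
    ring

end Aux

/-- `r_K(f,g) ≤ r_L(f,g)` for any field extension `L/K`, with equality if all
common irreducible factors of `f` and `g` are separable, and in particular if
`L/K` is a separable extension. -/
theorem stmt13 (K L : Type*) [Field K] [Field L] [Algebra K L]
    (f g : K[X]) (hf : f ≠ 0) (hg : g ≠ 0) :
    rinv K f g ≤ rinv L (f.map (algebraMap K L)) (g.map (algebraMap K L)) ∧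
    ((∀ μ : K[X], μ.Monic → Irreducible μ → μ ∣ f → μ ∣ g → μ.Separable) →
      rinv K f g = rinv L (f.map (algebraMap K L)) (g.map (algebraMap K L))) ∧
    (Algebra.IsSeparable K L →
      rinv K f g = rinv L (f.map (algebraMap K L)) (g.map (algebraMap K L))) := by
  obtain ⟨hle, heq⟩ := rinv_aux K L f g hf hg
  refine ⟨hle, ?_, ?_⟩
  · intro hsep
    refine heq ?_
    intro μ hm hi hdf hdg
    exact ((hsep μ hm hi hdf hdg).map).squarefree
  · intro hsepext
    refine heq ?_
    intro μ hm hi _ _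
    exact squarefree_map_of_isSeparable hm hi
end

section
/- Let K be a field, V a finite-dimensional K-vector space, and F ⊆ End_K(V) a commutative semisimple K-subalgebra. Let E be the commutant of F in End_K(V). Then the center of E equals F; equivalently, the bicommutant of F in End_K(V) is F itself. -/
/-- The bicommutant of a commutative semisimple subalgebra `F` of `End_K(V)`
is `F` itself. -/
theorem stmt14 (K V : Type*) [Field K] [AddCommGroup V] [Module K V]
    [FiniteDimensional K V]
    (F : Subalgebra K (Module.End K V))
    (hcomm : ∀ a b : F, a * b = b * a)
    (hss : IsSemisimpleRing F) :
    Subalgebra.centralizer K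
        ((Subalgebra.centralizer K (F : Set (Module.End K V)) : Subalgebra K (Module.End K V)) :
          Set (Module.End K V)) = F := by
  classical
  refine le_antisymm ?_ (Subalgebra.le_centralizer_centralizer K)
  intro z hz
  rw [Subalgebra.mem_centralizer_iff] at hz
  letI : Module F V := Module.compHom V (F.val.toRingHom)
  have hsmul : ∀ (f : F) (v : V), f • v = (f : Module.End K V) v := fun _ _ => rfl
  haveI : IsSemisimpleRing F := hss
  set ι := Fin (Module.finrank K V) with hι
  let b : Module.Basis ι K V := Module.finBasis K V
  -- Components of `F`-linear endomorphisms of `ι → V` commute with `z`.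
  have key : ∀ (g : (ι → V) →ₗ[F] (ι → V)) (x : ι → V) (i : ι),
      g (fun j => z (x j)) i = z (g x i) := by
    intro g x i
    have hK : ∀ (c : K) (w : V),
        c • w = (⟨algebraMap K (Module.End K V) c, F.algebraMap_mem c⟩ : F) • w := by
      intro c w
      rw [hsmul]
      rfl
    let gij : ι → Module.End K V := fun j =>
      { toFun := fun w => g (Pi.single j w) i
        map_add' := by
          intro w1 w2
          show g (Pi.single j (w1 + w2)) i = g (Pi.single j w1) i + g (Pi.single j w2) i
          rw [Pi.single_add, map_add, Pi.add_apply]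
        map_smul' := by
          intro c w
          simp only [RingHom.id_apply]
          show g (Pi.single j (c • w)) i = c • g (Pi.single j w) i
          rw [hK c w, Pi.single_smul, map_smul, Pi.smul_apply, hsmul,
            hK c (g (Pi.single j w) i)]
          rfl }
    have hgij : ∀ j, gij j ∈ Subalgebra.centralizer K (F : Set (Module.End K V)) := by
      intro j
      rw [Subalgebra.mem_centralizer_iff]
      intro f hf
      ext w
      show f (g (Pi.single j w) i) = g (Pi.single j (f w)) i
      have h1 : f w = (⟨f, hf⟩ : F) • w := rfl
      rw [h1, Pi.single_smul, map_smul, Pi.smul_apply, hsmul]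
    have hzg : ∀ (j : ι) (w : V), gij j (z w) = z (gij j w) := by
      intro j w
      have := hz (gij j) (hgij j)
      exact congrFun (congrArg DFunLike.coe this) w
    have hx : ∀ (y : ι → V), g y i = ∑ j, gij j (y j) := by
      intro y
      conv_lhs => rw [← Finset.univ_sum_single y]
      rw [map_sum]
      simp [gij]
    rw [hx, hx]
    simp only [hzg]
    rw [← map_sum]
  -- Apply to the projection onto the cyclic submodule generated by the basis tuple.
  let v₀ : ι → V := fun i => b i
  let W : Submodule F (ι → V) := Submodule.span F {v₀}
  obtain ⟨W', hW'⟩ := exists_isCompl W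
  let π : (ι → V) →ₗ[F] (ι → V) := W.subtype ∘ₗ Submodule.projectionOnto W W' hW'
  have hv₀ : v₀ ∈ W := Submodule.mem_span_singleton_self v₀
  have hπ : π v₀ = v₀ := by
    have := Submodule.projectionOnto_apply_left hW' ⟨v₀, hv₀⟩
    simpa [π] using congrArg Subtype.val this
  have hmem : (fun i => z (v₀ i)) ∈ W := by
    have heq : π (fun j => z (v₀ j)) = fun i => z (v₀ i) := by
      funext i
      rw [key π v₀ i, hπ]
    rw [← heq]
    exact (Submodule.projectionOnto W W' hW' _).2
  rw [Submodule.mem_span_singleton] at hmem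
  obtain ⟨f, hf⟩ := hmem
  have hzf : z = (f : Module.End K V) := by
    apply b.ext
    intro i
    have := congrFun hf i
    rw [Pi.smul_apply, hsmul] at this
    exact this.symm
  rw [hzf]
  exact f.2
end

section
/- Let L be a separably closed field containing F_q, let V be a finite-dimensional L-vector space, and let τ : V → V be a bijective additive map satisfying τ(a·v) = a^q·τ(v) for all a ∈ L, v ∈ V. Then the set of τ-invariants V^τ = {v ∈ V : τ(v) = v} is an F_q-vector space with dim_{F_q} V^τ = dim_L V, and the natural map V^τ ⊗_{F_q} L → V is an isomorphism of L-vector spaces. -/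
open Polynomial Function Submodule

set_option linter.unusedSectionVars false



section helpers
variable {p : ℕ} [Fact p.Prime] {L : Type*} [Field L] [CharP L p]

private lemma sep_of_deriv_neg_one (F : L[X]) (h : derivative F = -1) : F.Separable := by
  rw [Separable, h]
  exact (isCoprime_one_right).neg_right

private lemma qcast (e : ℕ) (he : 0 < e) : ((p ^ e : ℕ) : L) = 0 := by
  simp only [Nat.cast_pow, CharP.cast_eq_zero L p]
  exact zero_pow he.ne'

private lemma exists_AS [IsSepClosed L] (e : ℕ) (he : 0 < e) (a : L) :
    ∃ x : L, x ^ p ^ e = x - a := by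
  have hp : 1 < p := (Fact.out : p.Prime).one_lt
  have hq : 1 < p ^ e := Nat.one_lt_pow he.ne' hp
  set F : L[X] := X ^ p ^ e - X + C a with hF
  have hder : derivative F = -1 := by
    simp [hF, derivative_X_pow, qcast e he]
  have hndeg : F.natDegree = p ^ e := by
    have h1 : (X ^ p ^ e - X : L[X]).natDegree = p ^ e := by
      rw [natDegree_sub_eq_left_of_natDegree_lt (by simpa using hq), natDegree_X_pow]
    rw [hF, natDegree_add_C, h1]
  have hdeg : F.degree ≠ 0 := by
    have : 0 < F.natDegree := hndeg ▸ Nat.lt_of_lt_of_le one_pos hq.le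
    have := natDegree_pos_iff_degree_pos.mp this
    exact fun h => by simp [h] at this
  obtain ⟨x, hx⟩ := IsSepClosed.exists_root F hdeg (sep_of_deriv_neg_one F hder)
  refine ⟨x, ?_⟩
  have : x ^ p ^ e - x + a = 0 := by simpa [hF, IsRoot] using hx
  linear_combination this

private lemma card_fixed_field [IsSepClosed L] (e : ℕ) (he : 0 < e) :
    Nat.card {x : L // x ^ p ^ e = x} = p ^ e := by
  have hp : 1 < p := (Fact.out : p.Prime).one_lt
  have hq : 1 < p ^ e := Nat.one_lt_pow he.ne' hp
  have hsep : (X ^ p ^ e - X : L[X]).Separable :=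
    galois_poly_separable p (p ^ e) (dvd_pow_self p he.ne')
  have hsplit := IsSepClosed.splits_codomain (f := RingHom.id L) _ hsep
  have hndeg : (X ^ p ^ e - X : L[X]).natDegree = p ^ e := by
    rw [natDegree_sub_eq_left_of_natDegree_lt (by simpa using hq), natDegree_X_pow]
  have hne : (X ^ p ^ e - X : L[X]) ≠ 0 := by
    intro h
    rw [h] at hndeg; simp at hndeg; omega
  have e1 : {x : L // x ^ p ^ e = x} ≃ ((X ^ p ^ e - X : L[X]).rootSet L) := by
    refine Equiv.subtypeEquivRight fun x => ?_
    rw [mem_rootSet]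
    simp [hne, sub_eq_zero]
  have hcard := card_rootSet_eq_natDegree hsep (by simpa using hsplit)
  rw [Nat.card_congr e1, Nat.card_eq_fintype_card, hcard, hndeg]

end helpers


section A
variable {p e : ℕ} [Fact p.Prime] {L : Type*} [Field L] [CharP L p] [IsSepClosed L]
variable {V : Type*} [AddCommGroup V] [Module L V]

private lemma exists_fixed_ne_zero [FiniteDimensional L V] [Nontrivial V] (he : 0 < e)
    (T : V →ₛₗ[iterateFrobenius L p e] V) (hinj : Function.Injective T) :
    ∃ v : V, v ≠ 0 ∧ T v = v := by
  classical
  have hq : 1 < p ^ e := Nat.one_lt_pow he.ne' (Fact.out : p.Prime).one_lt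
  have hqL : ((p ^ e : ℕ) : L) = 0 := by
    simp only [Nat.cast_pow, CharP.cast_eq_zero L p]
    exact zero_pow he.ne'
  obtain ⟨w, hw⟩ := exists_ne (0 : V)
  set f : ℕ → V := fun i => (⇑T)^[i] w with hfdef
  have hfsucc : ∀ i, f (i + 1) = T (f i) := fun i => Function.iterate_succ_apply' _ i w
  have hfzero : ∀ i, f i ≠ 0 := by
    intro i h
    have h0 : (⇑T)^[i] (0 : V) = 0 := Function.iterate_fixed (map_zero T) i
    exact hw (Function.Injective.iterate hinj i (h.trans h0.symm))
  -- find the minimal dependence length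
  have hex : ∃ k, ¬ LinearIndependent L (fun i : Fin (k + 2) => f i) := by
    refine ⟨Module.finrank L V, fun h => ?_⟩
    have := h.fintype_card_le_finrank
    simp [Fintype.card_fin] at this
  set m := Nat.find hex with hmdef
  have hdep : ¬ LinearIndependent L (fun i : Fin (m + 2) => f i) := Nat.find_spec hex
  have hli : LinearIndependent L (fun i : Fin (m + 1) => f i) := by
    rcases Nat.eq_zero_or_pos m with h0 | h0
    · have h1 : LinearIndependent L (fun i : Fin 1 => f i) :=
        linearIndependent_unique_iff.mpr (by simpa using hfzero 0)
      rw [h0]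
      exact h1
    · have := Nat.find_min hex (show m - 1 < m from Nat.sub_lt h0 one_pos)
      rw [not_not] at this
      have hmm : m - 1 + 2 = m + 1 := by omega
      rw [hmm] at this
      exact this
  have hsnoc : (fun i : Fin (m + 2) => f i) =
      Fin.snoc (fun i : Fin (m + 1) => f i) (f (m + 1)) := by
    funext i
    refine Fin.lastCases ?_ (fun j => ?_) i
    · simp [Fin.snoc_last]
    · simp [Fin.snoc_castSucc]
  rw [hsnoc, linearIndependent_fin_snoc] at hdep
  have hmem : f (m + 1) ∈ span L (Set.range fun i : Fin (m + 1) => f i) := by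
    by_contra h
    exact hdep ⟨hli, h⟩
  obtain ⟨c, hc⟩ := (Submodule.mem_span_range_iff_exists_fun L).mp hmem
  set c' : ℕ → L := fun i => if h : i < m + 1 then c ⟨i, h⟩ else 0 with hc'def
  have hc' : ∑ i ∈ Finset.range (m + 1), c' i • f i = f (m + 1) := by
    rw [← Fin.sum_univ_eq_sum_range (fun i => c' i • f i) (m + 1), ← hc]
    refine Finset.sum_congr rfl fun i _ => ?_
    simp [hc'def, i.isLt, not_lt.mpr (Nat.lt_succ_iff.mp i.isLt)]
  have hexc : ∃ j, c' j ≠ 0 := by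
    by_contra h
    push_neg at h
    apply hfzero (m + 1)
    rw [← hc']
    simp [h]
  set j₀ := Nat.find hexc with hj₀def
  have hj₀ : c' j₀ ≠ 0 := Nat.find_spec hexc
  have hmin : ∀ j < j₀, c' j = 0 := fun j hj => not_not.mp (Nat.find_min hexc hj)
  have hj₀m : j₀ ≤ m := by
    by_contra h
    apply hj₀
    simp only [hc'def]
    rw [dif_neg (by omega)]
  -- the polynomial sequence
  set Q : ℕ → L[X] := fun n =>
    Nat.rec (C (c' 0) * X ^ p ^ e) (fun i Qi => Qi ^ p ^ e + C (c' (i + 1)) * X ^ p ^ e) n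
    with hQdef
  have hQ0 : Q 0 = C (c' 0) * X ^ p ^ e := rfl
  have hQs : ∀ i, Q (i + 1) = Q i ^ p ^ e + C (c' (i + 1)) * X ^ p ^ e := fun i => rfl
  have hder : ∀ i, derivative (Q i) = 0 := by
    intro i
    induction i with
    | zero => simp [hQ0, derivative_X_pow, hqL]
    | succ i ih => rw [hQs, derivative_add, derivative_pow, ih]
                   simp [derivative_X_pow, hqL]
  have hQzero : ∀ i, eval 0 (Q i) = 0 := by
    intro i
    induction i with
    | zero => simp [hQ0, zero_pow (by omega : p ^ e ≠ 0)]
    | succ i ih => rw [hQs]; simp [ih, zero_pow (by omega : p ^ e ≠ 0)]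
  have hQeqz : ∀ i, (∀ j ≤ i, c' j = 0) → Q i = 0 := by
    intro i
    induction i with
    | zero => intro h; rw [hQ0, h 0 le_rfl]; simp
    | succ i ih =>
      intro h
      rw [hQs, ih (fun j hj => h j (hj.trans (Nat.le_succ i))), h (i + 1) le_rfl]
      simp [zero_pow (by omega : p ^ e ≠ 0)]
  have hdeg : ∀ i, j₀ ≤ i → (Q i).natDegree = (p ^ e) ^ (i - j₀ + 1) := by
    intro i
    induction i with
    | zero =>
      intro h
      have h0 : j₀ = 0 := Nat.le_zero.mp h
      rw [hQ0, natDegree_C_mul_X_pow _ _ (h0 ▸ hj₀)]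
      simp [h0]
    | succ i ih =>
      intro h
      rcases Nat.lt_or_ge i j₀ with hlt | hge
      · have hj : j₀ = i + 1 := by omega
        have hQi : Q i = 0 := hQeqz i (fun j hj' => hmin j (by omega))
        rw [hQs, hQi, zero_pow (by omega : p ^ e ≠ 0), zero_add,
          natDegree_C_mul_X_pow _ _ (hj ▸ hj₀)]
        simp [hj]
      · have hQideg := ih hge
        have hpow : (Q i ^ p ^ e).natDegree = (p ^ e) ^ (i + 1 - j₀ + 1) := by
          rw [natDegree_pow, hQideg, ← pow_succ']
          congr 1
          omega
        rw [hQs, natDegree_add_eq_left_of_natDegree_lt, hpow]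
        rw [hpow]
        calc (C (c' (i + 1)) * X ^ p ^ e).natDegree
            ≤ (X ^ p ^ e : L[X]).natDegree := natDegree_C_mul_le _ _
          _ = p ^ e := natDegree_X_pow _
          _ < (p ^ e) ^ (i + 1 - j₀ + 1) := by
              conv_lhs => rw [← pow_one (p ^ e)]
              exact Nat.pow_lt_pow_right hq (by omega)
  -- the separable polynomial Q m - X
  set F : L[X] := Q m - X with hFdef
  have hFdeg : F.natDegree = (p ^ e) ^ (m - j₀ + 1) := by
    rw [hFdef, natDegree_sub_eq_left_of_natDegree_lt, hdeg m hj₀m]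
    rw [hdeg m hj₀m, natDegree_X]
    calc 1 < p ^ e := hq
      _ ≤ (p ^ e) ^ (m - j₀ + 1) := Nat.le_self_pow (by omega) _
  have hFdeg2 : 1 < F.natDegree := by
    rw [hFdeg]
    calc 1 < p ^ e := hq
      _ ≤ (p ^ e) ^ (m - j₀ + 1) := Nat.le_self_pow (by omega) _
  have hFne : F ≠ 0 := fun h => by simp [h] at hFdeg2
  have hFder : derivative F = -1 := by
    rw [hFdef, derivative_sub, hder m, derivative_X]
    ring
  have hFsep : F.Separable := by
    rw [Separable, hFder]
    exact (isCoprime_one_right).neg_right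
  have hsplit := IsSepClosed.splits_codomain (f := RingHom.id L) F hFsep
  have hcard := card_rootSet_eq_natDegree (K := L) hFsep (by simpa using hsplit)
  -- 0 is a root; there are ≥ 2 roots, pick a nonzero one
  have h0root : (0 : L) ∈ F.rootSet L := by
    rw [mem_rootSet]
    refine ⟨hFne, ?_⟩
    simp [hFdef, hQzero m]
  have hcard2 : 1 < Fintype.card (F.rootSet L) := by
    rw [hcard]; exact hFdeg2
  obtain ⟨y, hy⟩ := Fintype.exists_ne_of_one_lt_card hcard2 ⟨0, h0root⟩
  have hyne : (y : L) ≠ 0 := fun h => hy (Subtype.ext h)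
  have hyroot : eval (y : L) (Q m) = (y : L) := by
    have := y.2
    rw [mem_rootSet] at this
    have h2 := this.2
    simp only [hFdef, map_sub, aeval_X] at h2
    have h3 : eval (y : L) (Q m) - y = 0 := by
      have h4 : (aeval (y : L)) (Q m) = eval (y : L) (Q m) := by
        simp [aeval_def, eval₂_eq_eval_map]
      rw [h4] at h2
      exact h2
    linear_combination h3
  -- the coefficients b and the fixed vector u
  set b : ℕ → L := fun i => eval (y : L) (Q i) with hbdef
  have hb0 : b 0 = c' 0 * (y : L) ^ p ^ e := by simp [hbdef, hQ0]
  have hbs : ∀ i, b (i + 1) = b i ^ p ^ e + c' (i + 1) * (y : L) ^ p ^ e := by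
    intro i
    simp [hbdef, hQs i]
  have hbm : b m = (y : L) := hyroot
  set u : V := ∑ i ∈ Finset.range (m + 1), b i • f i with hudef
  have hune : u ≠ 0 := by
    intro h
    apply hyne
    have hfin : ∑ i : Fin (m + 1), b i • f i = 0 := by
      rw [Fin.sum_univ_eq_sum_range (fun i => b i • f i) (m + 1)]
      exact h
    have := Fintype.linearIndependent_iff.mp hli (fun i : Fin (m + 1) => b i) hfin
      ⟨m, Nat.lt_succ_self m⟩
    rw [← hbm]
    exact this
  refine ⟨u, hune, ?_⟩
  have hTu : T u = ∑ i ∈ Finset.range (m + 1), (b i ^ p ^ e) • f (i + 1) := by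
    rw [hudef, map_sum]
    refine Finset.sum_congr rfl fun i _ => ?_
    rw [LinearMap.map_smulₛₗ, iterateFrobenius_def, hfsucc]
  rw [hTu]
  have hsum : u = ∑ i ∈ Finset.range m, (b i ^ p ^ e) • f (i + 1) + (y : L) ^ p ^ e • f (m + 1) := by
    conv_lhs => rw [hudef]
    rw [Finset.sum_range_succ' (fun i => b i • f i) m, hb0]
    have h3 : ∀ i ∈ Finset.range m, b (i + 1) • f (i + 1) =
        (b i ^ p ^ e) • f (i + 1) + (y : L) ^ p ^ e • (c' (i + 1) • f (i + 1)) := by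
      intro i _
      rw [hbs, add_smul, smul_smul, mul_comm]
    rw [Finset.sum_congr rfl h3, Finset.sum_add_distrib]
    have h4 : (c' 0 * (y : L) ^ p ^ e) • f 0 = (y : L) ^ p ^ e • (c' 0 • f 0) := by
      rw [smul_smul, mul_comm]
    rw [h4, add_assoc, ← Finset.smul_sum, ← smul_add,
      ← Finset.sum_range_succ' (fun i => c' i • f i) m, hc']
  rw [hsum, Finset.sum_range_succ, hbm]

end A



section B
variable {p e : ℕ} [Fact p.Prime] {L : Type*} [Field L] [CharP L p]
variable {V : Type*} [AddCommGroup V] [Module L V]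

private lemma qpow_surjective [FiniteDimensional L V] [Nontrivial V]
    (T : V →ₛₗ[iterateFrobenius L p e] V) (hbij : Function.Bijective T) (a : L) :
    ∃ x : L, x ^ p ^ e = a := by
  classical
  set n := Module.finrank L V with hn
  have hnpos : 0 < n := Module.finrank_pos
  haveI : NeZero n := ⟨hnpos.ne'⟩
  set bs : Module.Basis (Fin n) L V := Module.finBasis L V with hbs
  have hspan : ⊤ ≤ span L (Set.range fun i => T (bs i)) := by
    intro v _
    obtain ⟨u, rfl⟩ := hbij.2 v
    have hu : ∑ i, bs.repr u i • bs i = u := bs.sum_repr u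
    rw [← hu, map_sum]
    refine Submodule.sum_mem _ fun i _ => ?_
    rw [LinearMap.map_smulₛₗ]
    exact Submodule.smul_mem _ _ (Submodule.subset_span ⟨i, rfl⟩)
  set bs' : Module.Basis (Fin n) L V :=
    basisOfTopLeSpanOfCardEqFinrank _ hspan (by simp [hn]) with hbs'
  have hbs'app : ∀ i, bs' i = T (bs i) := fun i =>
    congrFun (coe_basisOfTopLeSpanOfCardEqFinrank _ hspan (by simp [hn])) i
  obtain ⟨u, hu⟩ := hbij.2 (a • T (bs 0))
  have h1 : T u = ∑ i, (bs.repr u i ^ p ^ e) • bs' i := by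
    conv_lhs => rw [← bs.sum_repr u]
    rw [map_sum]
    refine Finset.sum_congr rfl fun i _ => ?_
    rw [LinearMap.map_smulₛₗ, iterateFrobenius_def, hbs'app]
  have h2 : T u = ∑ i, (if i = 0 then a else 0) • bs' i := by
    rw [hu, ← hbs'app 0]
    simp
  have h3 := congrArg (fun c => c 0) ((Module.Basis.repr_sum_self bs' _).symm.trans
    (congrArg (fun v => ⇑(bs'.repr v)) (h1.symm.trans h2)))
  have h4 := (Module.Basis.repr_sum_self bs' (fun i => if i = 0 then a else 0))
  refine ⟨bs.repr u 0, ?_⟩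
  have := h3.trans (congrArg (fun c => c 0) h4)
  simpa using this

end B


section C
variable {p e : ℕ} [Fact p.Prime] {L : Type*} [Field L] [CharP L p] [IsSepClosed L]
variable {V : Type*} [AddCommGroup V] [Module L V]




private lemma span_fixed_eq_top [FiniteDimensional L V] (he : 0 < e)
    (T : V →ₛₗ[iterateFrobenius L p e] V) (hbij : Function.Bijective T) :
    span L {v : V | T v = v} = ⊤ := by
  classical
  by_contra hne
  haveI : Nontrivial V := by
    by_contra h
    rw [not_nontrivial_iff_subsingleton] at h
    exact hne (Subsingleton.elim _ _)
  set W := span L {v : V | T v = v} with hW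
  have hle : W ≤ W.comap T := by
    rw [hW]
    apply span_le.mpr
    intro v hv
    simp only [SetLike.mem_coe, mem_comap]
    have hv' : T v = v := hv
    rw [hv']
    exact subset_span hv
  set Tb := W.mapQ W T hle with hTb
  have hsurj : Function.Surjective Tb := by
    intro z
    obtain ⟨v, rfl⟩ := Submodule.mkQ_surjective W z
    obtain ⟨u, hu⟩ := hbij.2 v
    exact ⟨Submodule.Quotient.mk u, by rw [Submodule.mapQ_apply, hu]; rfl⟩
  have hback : ∀ x : V, T x ∈ W → x ∈ W := by
    intro x hx
    rw [hW] at hx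
    obtain ⟨k, a, g, hsum⟩ := Submodule.mem_span_set'.mp hx
    choose r hr using fun i => qpow_surjective T hbij (a i)
    have heq : T (∑ i, r i • (g i : V)) = T x := by
      rw [map_sum, ← hsum]
      refine Finset.sum_congr rfl fun i _ => ?_
      rw [LinearMap.map_smulₛₗ, iterateFrobenius_def, hr]
      congr 1
      exact (g i).2
    rw [← hbij.1 heq]
    exact Submodule.sum_mem _ fun i _ => Submodule.smul_mem _ _ (subset_span (g i).2)
  have hinj : Function.Injective Tb := by
    intro z1 z2 h
    obtain ⟨x, rfl⟩ := Submodule.mkQ_surjective W z1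
    obtain ⟨y, rfl⟩ := Submodule.mkQ_surjective W z2
    have h1 : Submodule.Quotient.mk (T x) = (Submodule.Quotient.mk (T y) : V ⧸ W) := by
      rw [← Submodule.mapQ_apply (h := hle), ← Submodule.mapQ_apply (h := hle)]
      exact h
    rw [Submodule.Quotient.eq] at h1
    have h2 : T (x - y) ∈ W := by rw [map_sub]; exact h1
    have h3 : x - y ∈ W := hback _ h2
    exact (Submodule.Quotient.eq W).mpr h3
  haveI : Nontrivial (V ⧸ W) :=
    Submodule.Quotient.nontrivial_iff.mpr hne
  obtain ⟨z, hz0, hzfix⟩ := exists_fixed_ne_zero he Tb hinj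
  obtain ⟨u, rfl⟩ := Submodule.mkQ_surjective W z
  have hTu : T u - u ∈ W := by
    have : Submodule.Quotient.mk (T u) = (Submodule.Quotient.mk u : V ⧸ W) := by
      rw [← Submodule.mapQ_apply (h := hle)]
      exact hzfix
    exact (Submodule.Quotient.eq W).mp this
  rw [hW] at hTu
  obtain ⟨k, a, g, hsum⟩ := Submodule.mem_span_set'.mp hTu
  choose x hx using fun i => exists_AS (p := p) e he (a i)
  set u' : V := u + ∑ i, x i • (g i : V) with hu'
  have hu'fix : T u' = u' := by
    rw [hu', map_add, map_sum]
    have h5 : ∀ i : Fin k, T (x i • (g i : V)) = (x i - a i) • (g i : V) := by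
      intro i
      rw [LinearMap.map_smulₛₗ, iterateFrobenius_def, hx]
      congr 1
      exact (g i).2
    rw [Finset.sum_congr rfl fun i _ => h5 i]
    have h6 : ∀ i : Fin k, (x i - a i) • (g i : V) = x i • (g i : V) - a i • (g i : V) :=
      fun i => sub_smul _ _ _
    rw [Finset.sum_congr rfl fun i _ => h6 i, Finset.sum_sub_distrib, hsum]
    abel
  have hu'W : u' ∈ W := subset_span hu'fix
  have huW : u ∈ W := by
    have : (∑ i, x i • (g i : V)) ∈ W :=
      Submodule.sum_mem _ fun i _ => Submodule.smul_mem _ _ (subset_span (g i).2)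
    have := Submodule.sub_mem W hu'W this
    simpa [hu'] using this
  apply hz0
  rw [← Submodule.Quotient.mk_eq_zero W] at huW
  exact huW

end C


/-- Lang's theorem / Frobenius descent: over a separably closed field `L ⊇ 𝔽_q`, a
bijective `q`-Frobenius-semilinear endomorphism `τ` of a finite-dimensional
`L`-vector space `V` has `𝔽_q`-space of invariants of dimension `dim_L V`, spanned
by an `L`-basis of `V` consisting of fixed vectors; so `V^τ ⊗_{𝔽_q} L ≅ V`. -/
theorem stmt16 (p e : ℕ) [Fact p.Prime] (he : 0 < e)
    (L : Type*) [Field L] [CharP L p] [IsSepClosed L]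
    (V : Type*) [AddCommGroup V] [Module L V] [FiniteDimensional L V]
    (τ : V → V) (hbij : Function.Bijective τ)
    (hadd : ∀ v w : V, τ (v + w) = τ v + τ w)
    (hsem : ∀ (a : L) (v : V), τ (a • v) = a ^ p ^ e • τ v) :
    Nat.card {v : V // τ v = v} = (p ^ e) ^ Module.finrank L V ∧
    ∃ b : Module.Basis (Fin (Module.finrank L V)) L V,
      (∀ i, τ (b i) = b i) ∧
      ∀ v : V, τ v = v → ∃ c : Fin (Module.finrank L V) → L,
        (∀ i, c i ^ p ^ e = c i) ∧ v = ∑ i, c i • b i := by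
  classical
  set n := Module.finrank L V with hn
  set T : V →ₛₗ[iterateFrobenius L p e] V :=
    { toFun := τ
      map_add' := hadd
      map_smul' := fun a v => by show τ (a • v) = _; rw [hsem, iterateFrobenius_def] } with hT
  have hTapp : ∀ v, T v = τ v := fun v => rfl
  have hTbij : Function.Bijective T := hbij
  have hspan := span_fixed_eq_top he T hTbij
  -- a basis of fixed vectors
  have hsp : ⊤ ≤ span L {v : V | T v = v} := le_of_eq hspan.symm
  set b0 := Module.Basis.ofSpan hsp with hb0
  haveI := FiniteDimensional.fintypeBasisIndex b0
  have hcard : Fintype.card ((linearIndepOn_empty L (id : V → V)).extend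
      (Set.empty_subset {v : V | T v = v})) = n := (Module.finrank_eq_card_basis b0).symm
  set b : Module.Basis (Fin n) L V := b0.reindex (Fintype.equivFinOfCardEq hcard) with hb
  have hbfix : ∀ i, τ (b i) = b i := by
    intro i
    have h1 : b i = b0 ((Fintype.equivFinOfCardEq hcard).symm i) := b0.reindex_apply _ i
    have h2 : b0 ((Fintype.equivFinOfCardEq hcard).symm i) ∈ {v : V | T v = v} :=
      Module.Basis.ofSpan_subset hsp (Set.mem_range_self _)
    rw [h1]
    exact h2
  -- fixed vectors have Frobenius-fixed coordinates
  have hfixco : ∀ v : V, τ v = v → ∀ i, b.repr v i ^ p ^ e = b.repr v i := by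
    intro v hv i
    have h1 : T (∑ j, b.repr v j • b j) = ∑ j, (b.repr v j ^ p ^ e) • b j := by
      rw [map_sum]
      refine Finset.sum_congr rfl fun j _ => ?_
      rw [LinearMap.map_smulₛₗ, iterateFrobenius_def, hTapp, hbfix]
    rw [b.sum_repr v, hTapp, hv] at h1
    have h2 := congrArg (fun w => ⇑(b.repr w)) h1
    simp only [Module.Basis.repr_sum_self] at h2
    exact (congrFun h2 i).symm
  -- the equivalence with coordinate tuples
  have hfix_of_co : ∀ c : Fin n → L, (∀ i, c i ^ p ^ e = c i) → τ (∑ i, c i • b i) = ∑ i, c i • b i := by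
    intro c hc
    rw [← hTapp, map_sum]
    refine Finset.sum_congr rfl fun i _ => ?_
    rw [LinearMap.map_smulₛₗ, iterateFrobenius_def, hc, hTapp, hbfix]
  refine ⟨?_, b, hbfix, fun v hv => ⟨fun i => b.repr v i, hfixco v hv, (b.sum_repr v).symm⟩⟩
  -- counting
  have hEquiv : {v : V // τ v = v} ≃ (Fin n → {x : L // x ^ p ^ e = x}) :=
    { toFun := fun v i => ⟨b.repr v.1 i, hfixco v.1 v.2 i⟩
      invFun := fun c => ⟨∑ i, (c i : L) • b i, hfix_of_co _ fun i => (c i).2⟩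
      left_inv := fun v => Subtype.ext (b.sum_repr v.1)
      right_inv := fun c => by
        funext i
        exact Subtype.ext (congrFun (b.repr_sum_self fun j => (c j : L)) i) }
  rw [Nat.card_congr hEquiv, Nat.card_pi]
  simp [card_fixed_field (p := p) e he]
end

section
/- Let L be a perfect field containing F_q and let f : M → M' be an injective homomorphism of finite free A_L-modules (A_L = F_q[t] ⊗_{F_q} L) with finite-dimensional cokernel K = coker f, equipped with the induced Frobenius-semilinear map τ_K : K → K. Then f factors as f = f_sep ∘ f_insep where f_insep : M → M'' has cokernel on which τ is nilpotent (purely inseparable part) and f_sep : M'' → M' has cokernel on which τ is bijective (separable part); such a factorization exists by splitting K into its étale and nilpotent parts. -/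
/-- Over a perfect field `L`, an injective map `f : M → M'` of finite free
`A_L = L[t]`-modules compatible with `σ`-semilinear Frobenius structures `τ`, `τ'`
and with finite-dimensional cokernel factors as a purely inseparable isogeny
followed by a separable one: there is an intermediate `τ'`-stable submodule `N`
with `f(M) ⊆ N ⊆ M'` such that `τ'` is nilpotent on `N / f(M)` and bijective on
`M' / N`. -/
theorem stmt19 (p e : ℕ) [Fact p.Prime] (he : 0 < e)
    (L : Type*) [Field L] [CharP L p] [PerfectRing L p]
    (σ : Polynomial L →+* Polynomial L)
    (hσC : ∀ a : L, σ (Polynomial.C a) = Polynomial.C (a ^ p ^ e))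
    (hσX : σ Polynomial.X = Polynomial.X)
    {M M' : Type*} [AddCommGroup M] [Module (Polynomial L) M]
    [Module.Free (Polynomial L) M] [Module.Finite (Polynomial L) M]
    [AddCommGroup M'] [Module (Polynomial L) M']
    [Module.Free (Polynomial L) M'] [Module.Finite (Polynomial L) M']
    [Module L M'] [IsScalarTower L (Polynomial L) M']
    (τ : M → M) (τ' : M' → M')
    (hτadd : ∀ x y : M, τ (x + y) = τ x + τ y)
    (hτ'add : ∀ x y : M', τ' (x + y) = τ' x + τ' y)
    (hτsem : ∀ (r : Polynomial L) (x : M), τ (r • x) = σ r • τ x)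
    (hτ'sem : ∀ (r : Polynomial L) (x : M'), τ' (r • x) = σ r • τ' x)
    (f : M →ₗ[Polynomial L] M') (hf : Function.Injective f)
    (hcompat : ∀ x : M, f (τ x) = τ' (f x))
    [FiniteDimensional L (M' ⧸ LinearMap.range f)] :
    ∃ N : Submodule (Polynomial L) M',
      LinearMap.range f ≤ N ∧
      (∀ x ∈ N, τ' x ∈ N) ∧
      (∃ n : ℕ, ∀ x ∈ N, τ'^[n] x ∈ LinearMap.range f) ∧
      (∀ y : M', τ' y ∈ N → y ∈ N) ∧
      (∀ y : M', ∃ z : M', y - τ' z ∈ N) := by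
  classical
  set R := LinearMap.range f with hR
  -- basic facts about τ'
  have hτ'0 : τ' 0 = 0 := by
    have := hτ'add 0 0
    simpa using this.symm
  have hitadd : ∀ (n : ℕ) (x y : M'), τ'^[n] (x + y) = τ'^[n] x + τ'^[n] y := by
    intro n
    induction n with
    | zero => intro x y; simp
    | succ n ih =>
      intro x y
      simp only [Function.iterate_succ_apply']
      rw [ih, hτ'add]
  have hit0 : ∀ n : ℕ, τ'^[n] (0 : M') = 0 := by
    intro n
    induction n with
    | zero => simp
    | succ n ih => simp [Function.iterate_succ_apply', ih, hτ'0]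
  have hitsmul : ∀ (n : ℕ) (r : Polynomial L) (x : M'),
      τ'^[n] (r • x) = (σ^[n] r) • τ'^[n] x := by
    intro n
    induction n with
    | zero => intro r x; simp
    | succ n ih =>
      intro r x
      simp only [Function.iterate_succ_apply']
      rw [ih, hτ'sem]
  have hRstab : ∀ x ∈ R, τ' x ∈ R := by
    rintro x ⟨m, rfl⟩
    exact ⟨τ m, hcompat m⟩
  -- the submodules N_n
  let Nn : ℕ → Submodule (Polynomial L) M' := fun n =>
    { carrier := {y | τ'^[n] y ∈ R}
      add_mem' := by
        intro a b ha hb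
        simp only [Set.mem_setOf_eq] at *
        rw [hitadd]
        exact add_mem ha hb
      zero_mem' := by simp [hit0]
      smul_mem' := by
        intro c x hx
        simp only [Set.mem_setOf_eq] at *
        rw [hitsmul]
        exact Submodule.smul_mem _ _ hx }
  have hNmem : ∀ (n : ℕ) (y : M'), y ∈ Nn n ↔ τ'^[n] y ∈ R := fun n y => Iff.rfl
  have hNsucc : ∀ n, Nn n ≤ Nn (n + 1) := by
    intro n y hy
    rw [hNmem] at *
    rw [Function.iterate_succ_apply']
    exact hRstab _ hy
  have hmono : Monotone Nn := monotone_nat_of_le_succ hNsucc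
  obtain ⟨n₀, hn₀⟩ := monotone_stabilizes_iff_noetherian.mpr
    (inferInstance : IsNoetherian (Polynomial L) M') ⟨Nn, hmono⟩
  refine ⟨Nn n₀, ?_, ?_, ⟨n₀, fun x hx => hx⟩, ?_, ?_⟩
  · rintro x ⟨m, rfl⟩
    rw [hNmem]
    clear hn₀
    induction n₀ with
    | zero => exact ⟨m, rfl⟩
    | succ n ih =>
      rw [Function.iterate_succ_apply']
      exact hRstab _ ih
  · intro x hx
    rw [hNmem] at *
    rw [← Function.iterate_succ_apply, Function.iterate_succ_apply']
    exact hRstab _ hx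
  · intro y hy
    have : y ∈ Nn (n₀ + 1) := by
      rw [hNmem, Function.iterate_succ_apply]
      exact hy
    rw [show Nn n₀ = Nn (n₀ + 1) from hn₀ (n₀ + 1) (Nat.le_succ _)]
    exact this
  · -- surjectivity on the quotient
    set N := Nn n₀ with hN
    have hNstab : ∀ x ∈ N, τ' x ∈ N := by
      intro x hx
      rw [hNmem] at *
      rw [← Function.iterate_succ_apply, Function.iterate_succ_apply']
      exact hRstab _ hx
    have hNpre : ∀ y : M', τ' y ∈ N → y ∈ N := by
      intro y hy
      have h1 : y ∈ Nn (n₀ + 1) := by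
        rw [hNmem, Function.iterate_succ_apply]
        exact hy
      rw [hN, show Nn n₀ = Nn (n₀ + 1) from hn₀ (n₀ + 1) (Nat.le_succ _)]
      exact h1
    have hRN : R ≤ N := by
      rintro x ⟨m, rfl⟩
      rw [hNmem]
      clear hn₀ hNstab hNpre hN
      induction n₀ with
      | zero => exact ⟨m, rfl⟩
      | succ n ih =>
        rw [Function.iterate_succ_apply']
        exact hRstab _ ih
    -- the Frobenius equivalence
    haveI : ExpChar L p := ExpChar.prime (Fact.out)
    set φ : L ≃+* L := iterateFrobeniusEquiv L p e with hφ
    have hφ_apply : ∀ a : L, φ a = a ^ p ^ e := fun a => rfl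
    haveI hφsurj : RingHomSurjective (φ : L →+* L) := ⟨φ.surjective⟩
    -- semilinearity of τ' over L
    have hτ'Lsmul : ∀ (a : L) (x : M'), τ' (a • x) = (a ^ p ^ e) • τ' x := by
      intro a x
      rw [← IsScalarTower.algebraMap_smul (Polynomial L) a x]
      rw [hτ'sem]
      rw [Polynomial.algebraMap_eq, hσC, ← Polynomial.algebraMap_eq,
        IsScalarTower.algebraMap_smul]
    -- quotient by N as L-module
    set NL : Submodule L M' := N.restrictScalars L with hNL
    -- finite dimensionality of the quotient
    haveI : FiniteDimensional L (M' ⧸ (R.restrictScalars L)) :=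
      Module.Finite.equiv (Submodule.Quotient.restrictScalarsEquiv L R).symm
    have hcomap : R.restrictScalars L ≤ Submodule.comap (LinearMap.id : M' →ₗ[L] M') NL :=
      fun x hx => hRN hx
    have hsurj : Function.Surjective
        ((R.restrictScalars L).mapQ NL (LinearMap.id : M' →ₗ[L] M') hcomap) := by
      intro y
      obtain ⟨x, rfl⟩ := Submodule.Quotient.mk_surjective NL y
      exact ⟨Submodule.Quotient.mk x, rfl⟩
    haveI : FiniteDimensional L (M' ⧸ NL) := Module.Finite.of_surjective _ hsurj
    -- the induced semilinear endomorphism of M' ⧸ NL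
    let T0 : M' →ₛₗ[(φ : L →+* L)] (M' ⧸ NL) :=
      { toFun := fun y => Submodule.Quotient.mk (τ' y)
        map_add' := by
          intro x y
          simp only [hτ'add]
          rfl
        map_smul' := by
          intro a x
          simp only [hτ'Lsmul, RingHom.coe_coe]
          rw [hφ_apply]
          rw [← Submodule.Quotient.mk_smul] }
    have hker : NL ≤ LinearMap.ker T0 := by
      intro x hx
      simp only [LinearMap.mem_ker]
      show Submodule.Quotient.mk (τ' x) = 0
      rw [Submodule.Quotient.mk_eq_zero]
      exact hNstab x hx
    let τQ : (M' ⧸ NL) →ₛₗ[(φ : L →+* L)] (M' ⧸ NL) := NL.liftQ T0 hker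
    have hτQ_mk : ∀ x : M', τQ (Submodule.Quotient.mk x) = Submodule.Quotient.mk (τ' x) :=
      fun x => rfl
    have hτQinj : Function.Injective τQ := by
      rw [← LinearMap.ker_eq_bot, eq_bot_iff]
      intro y hy
      obtain ⟨x, rfl⟩ := Submodule.Quotient.mk_surjective NL y
      simp only [LinearMap.mem_ker] at hy
      rw [hτQ_mk, Submodule.Quotient.mk_eq_zero] at hy
      rw [Submodule.mem_bot, Submodule.Quotient.mk_eq_zero]
      exact hNpre x hy
    -- linear independence of images of a basis
    intro y
    set d := Module.finrank L (M' ⧸ NL) with hdd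
    let b := Module.finBasis L (M' ⧸ NL)
    let v : Fin d → (M' ⧸ NL) := fun i => τQ (b i)
    have hli : LinearIndependent L v := by
      rw [Fintype.linearIndependent_iff]
      intro c hc i
      have h1 : ∀ i, c i • v i = τQ (φ.symm (c i) • b i) := by
        intro i
        rw [map_smulₛₗ]
        simp [RingEquiv.apply_symm_apply]
        rfl
      rw [Finset.sum_congr rfl (fun i _ => h1 i), ← map_sum] at hc
      have h2 : ∑ i, φ.symm (c i) • b i = 0 := by
        apply hτQinj
        rw [hc, map_zero]
      have h3 := (Fintype.linearIndependent_iff.mp b.linearIndependent) _ h2 i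
      have h4 := congrArg φ h3
      simpa using h4
    have hspan := hli.span_eq_top_of_card_eq_finrank' (by simp [hdd])
    have hmem : (⊤ : Submodule L (M' ⧸ NL)) ≤ LinearMap.range τQ := by
      rw [← hspan]
      apply Submodule.span_le.mpr
      rintro _ ⟨i, rfl⟩
      exact ⟨b i, rfl⟩
    obtain ⟨zq, hz⟩ := hmem (Submodule.mem_top :
      (Submodule.Quotient.mk y : M' ⧸ NL) ∈ ⊤)
    obtain ⟨z, rfl⟩ := Submodule.Quotient.mk_surjective NL zq
    refine ⟨z, ?_⟩
    have h5 : Submodule.Quotient.mk (p := NL) (τ' z) = Submodule.Quotient.mk y := hz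
    have h6 : Submodule.Quotient.mk (p := NL) (y - τ' z) = 0 := by
      rw [Submodule.Quotient.mk_sub, h5, sub_self]
    rw [Submodule.Quotient.mk_eq_zero] at h6
    exact h6
end
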